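/- Let R be a commutative ring, G a group, H a normal subgroup of G, and M an R-module equipped with an R-linear action of G (an R[G]-module); for g ∈ G write ρ_g : M → M for the R-linear map m ↦ g·m and c_g : H → H for the group homomorphism x ↦ g⁻¹xg. Suppose g ∈ G is central in G, and let g₁ be any element of the coset gH (so g₁ is an arbitrary lift of the image of g in G/H). Let T : Hⁱ(H, M) → Hⁱ(H, M) be the endomorphism induced by functoriality of group cohomology from the compatible pair (c_{g₁} : H → H, ρ_{g₁} : M → M) (compatibility: ρ_{g₁}(c_{g₁}(x)·m) = x·ρ_{g₁}(m) for all x ∈ H, m ∈ M). Then for every polynomial p ∈ R[x] such that p(ρ_g) = 0 as an endomorphism of M, one has p(T) = 0 as an endomorphism of Hⁱ(H, M), for every i ≥ 0. -/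

import Mathlib

open groupCohomology CategoryTheory Finset

section Tuples
variable {K : Type} [Group K]

def extT {N : ℕ} (x : Fin N → K) : ℕ → K := fun i => if hi : i < N then x ⟨i, hi⟩ else 1

def resT (N : ℕ) (y : ℕ → K) : Fin N → K := fun k => y k

def cnsT (l : ℕ) (y : ℕ → K) : ℕ → K := fun i =>
  if i < l then y i else if i = l then y i * y (i + 1) else y (i + 1)

variable (h : K)

def inzT (j : ℕ) (y : ℕ → K) : ℕ → K := fun i =>
  if i < j then y i else if i = j then h else h⁻¹ * y (i - 1) * h

lemma extT_lt {N : ℕ} (x : Fin N → K) {i : ℕ} (hi : i < N) : extT x i = x ⟨i, hi⟩ := dif_pos hi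

lemma cnsT_lt {l i : ℕ} (y : ℕ → K) (hi : i < l) : cnsT l y i = y i := if_pos hi
lemma cnsT_eq {l i : ℕ} (y : ℕ → K) (hi : i = l) : cnsT l y i = y i * y (i + 1) := by
  simp [cnsT, hi]
lemma cnsT_gt {l i : ℕ} (y : ℕ → K) (hi : l < i) : cnsT l y i = y (i + 1) := by
  simp only [cnsT, if_neg (by omega : ¬ i < l), if_neg (by omega : ¬ i = l)]
lemma inzT_lt {j i : ℕ} (y : ℕ → K) (hi : i < j) : inzT h j y i = y i := if_pos hi
lemma inzT_eq {j i : ℕ} (y : ℕ → K) (hi : i = j) : inzT h j y i = h := by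
  simp [inzT, hi]
lemma inzT_gt {j i : ℕ} (y : ℕ → K) (hi : j < i) : inzT h j y i = h⁻¹ * y (i - 1) * h := by
  simp only [inzT, if_neg (by omega : ¬ i < j), if_neg (by omega : ¬ i = j)]

lemma contractNth_eq {N : ℕ} (x : Fin (N + 1) → K) (j : Fin (N + 1)) :
    Fin.contractNth j (· * ·) x = resT N (cnsT (j : ℕ) (extT x)) := by
  funext k
  rcases lt_trichotomy (k : ℕ) (j : ℕ) with hk | hk | hk
  · rw [Fin.contractNth_apply_of_lt _ _ _ _ hk]
    show _ = cnsT _ _ _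
    rw [cnsT_lt _ hk, extT_lt x (by omega)]; rfl
  · rw [Fin.contractNth_apply_of_eq _ _ _ _ hk]
    show _ = cnsT _ _ _
    rw [cnsT_eq _ hk, extT_lt x (by omega), extT_lt x (by omega)]; rfl
  · rw [Fin.contractNth_apply_of_gt _ _ _ _ hk]
    show _ = cnsT _ _ _
    rw [cnsT_gt _ hk, extT_lt x (by omega)]; rfl

lemma inzT_zero_zero (y : ℕ → K) : inzT h 0 y 0 = h := by simp [inzT]

lemma inzT_succ_zero (j : ℕ) (y : ℕ → K) : inzT h (j + 1) y 0 = y 0 := by simp [inzT]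

lemma inzT_zero_succ (y : ℕ → K) (i : ℕ) : inzT h 0 y (i + 1) = h⁻¹ * y i * h := by
  simp [inzT]

-- E3
lemma inzT_succ_succ (j : ℕ) (y : ℕ → K) (i : ℕ) :
    inzT h (j + 1) y (i + 1) = inzT h j (fun t => y (t + 1)) i := by
  rcases lt_trichotomy i j with hi | hi | hi
  · rw [inzT_lt _ _ (by omega), inzT_lt _ _ hi]
  · rw [inzT_eq _ _ (by omega), inzT_eq _ _ hi]
  · rw [inzT_gt _ _ (by omega), inzT_gt _ _ hi]
    have : i + 1 - 1 = (i - 1) + 1 := by omega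
    rw [this]

lemma extT_succ {N : ℕ} (x : Fin (N + 1) → K) :
    (fun i => extT x (i + 1)) = extT (fun k : Fin N => x k.succ) := by
  funext i
  by_cases hi : i < N
  · rw [extT_lt x (by omega), extT_lt _ hi]
    congr 1
  · simp only [extT, dif_neg (by omega : ¬ i + 1 < N + 1), dif_neg hi]

-- E4
lemma cnsT_inzT_diag (j : ℕ) (y : ℕ → K) :
    cnsT j (inzT h j y) = cnsT j (inzT h (j + 1) y) := by
  funext i
  rcases lt_trichotomy i j with hi | hi | hi
  · rw [cnsT_lt _ hi, cnsT_lt _ hi, inzT_lt _ _ hi, inzT_lt _ _ (by omega)]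
  · rw [cnsT_eq _ hi, cnsT_eq _ hi, inzT_eq _ _ hi, inzT_gt _ _ (by omega),
      inzT_lt _ _ (by omega), inzT_eq _ _ (by omega)]
    have : i + 1 - 1 = i := by omega
    rw [this]
    group
  · rw [cnsT_gt _ hi, cnsT_gt _ hi, inzT_gt _ _ (by omega), inzT_gt _ _ (by omega)]

-- E5
lemma cnsT_inzT_top {N : ℕ} (x : Fin N → K) :
    resT N (cnsT N (inzT h N (extT x))) = x := by
  funext k
  have hk : (k : ℕ) < N := k.isLt
  show cnsT _ _ _ = _
  rw [cnsT_lt _ hk, inzT_lt _ _ hk, extT_lt x hk]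

-- E6 : l < j
lemma cnsT_inzT_of_lt {l j : ℕ} (hlj : l < j) (y : ℕ → K) :
    cnsT l (inzT h (j + 1) y) = inzT h j (cnsT l y) := by
  funext i
  rcases lt_trichotomy i l with hi | hi | hi
  · rw [cnsT_lt _ hi, inzT_lt _ _ (by omega), inzT_lt _ _ (by omega), cnsT_lt _ hi]
  · rw [cnsT_eq _ hi, inzT_lt _ _ (by omega), inzT_lt _ _ (by omega),
      inzT_lt _ _ (by omega), cnsT_eq _ hi]
  · rcases lt_trichotomy i j with hij | hij | hij
    · rw [cnsT_gt _ hi, inzT_lt _ _ (by omega), inzT_lt _ _ hij, cnsT_gt _ hi]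
    · rw [cnsT_gt _ hi, inzT_eq _ _ (by omega), inzT_eq _ _ hij]
    · rw [cnsT_gt _ hi, inzT_gt _ _ (by omega), inzT_gt _ _ hij,
        cnsT_gt _ (by omega : l < i - 1)]
      have : i + 1 - 1 = (i - 1) + 1 := by omega
      rw [this]

-- E7 : t ≥ j
lemma cnsT_inzT_of_ge {j t : ℕ} (hjt : j ≤ t) (y : ℕ → K) :
    cnsT (t + 1) (inzT h j y) = inzT h j (cnsT t y) := by
  funext i
  rcases lt_trichotomy i j with hi | hi | hi
  · rw [cnsT_lt _ (by omega), inzT_lt _ _ hi, inzT_lt _ _ hi, cnsT_lt _ (by omega)]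
  · rw [cnsT_lt _ (by omega), inzT_eq _ _ hi, inzT_eq _ _ hi]
  · rcases lt_trichotomy i (t + 1) with hit | hit | hit
    · rw [cnsT_lt _ hit, inzT_gt _ _ hi, inzT_gt _ _ hi, cnsT_lt _ (by omega)]
    · rw [cnsT_eq _ hit, inzT_gt _ _ hi, inzT_gt _ _ (by omega), inzT_gt _ _ hi,
        cnsT_eq _ (by omega : i - 1 = t)]
      have h1 : i + 1 - 1 = (i - 1) + 1 := by omega
      rw [h1]
      group
    · rw [cnsT_gt _ hit, inzT_gt _ _ (by omega), inzT_gt _ _ hi, cnsT_gt _ (by omega)]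
      have : i + 1 - 1 = (i - 1) + 1 := by omega
      rw [this]

-- G1
lemma resT_cnsT_extT {N l : ℕ} (y : ℕ → K) :
    resT N (cnsT l (extT (resT (N + 1) y))) = resT N (cnsT l y) := by
  funext k
  have hk : (k : ℕ) < N := k.isLt
  show cnsT _ _ _ = cnsT _ _ _
  rcases lt_trichotomy (k : ℕ) l with hi | hi | hi
  · rw [cnsT_lt _ hi, cnsT_lt _ hi, extT_lt _ (by omega)]; rfl
  · rw [cnsT_eq _ hi, cnsT_eq _ hi, extT_lt _ (by omega), extT_lt _ (by omega)]; rfl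
  · rw [cnsT_gt _ hi, cnsT_gt _ hi, extT_lt _ (by omega)]; rfl

-- G2 (u ≤ N)
lemma resT_inzT_extT {N u : ℕ} (hu : u ≤ N) (y : ℕ → K) :
    resT (N + 1) (inzT h u (extT (resT N y))) = resT (N + 1) (inzT h u y) := by
  funext k
  have hk : (k : ℕ) < N + 1 := k.isLt
  show inzT _ _ _ _ = inzT _ _ _ _
  rcases lt_trichotomy (k : ℕ) u with hi | hi | hi
  · rw [inzT_lt _ _ hi, inzT_lt _ _ hi, extT_lt _ (by omega)]; rfl
  · rw [inzT_eq _ _ hi, inzT_eq _ _ hi]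
  · rw [inzT_gt _ _ hi, inzT_gt _ _ hi, extT_lt _ (by omega)]; rfl

-- conjugation compatibility with cnsT (for chain-map property)
lemma cnsT_conj {N l : ℕ} (hl : l < N + 1) (x : Fin (N + 1) → K) :
    (fun k : Fin N => h⁻¹ * (resT N (cnsT l (extT x))) k * h)
      = resT N (cnsT l (extT (fun k : Fin (N + 1) => h⁻¹ * x k * h))) := by
  funext k
  have hk : (k : ℕ) < N := k.isLt
  show h⁻¹ * cnsT _ _ _ * h = cnsT _ _ _
  rcases lt_trichotomy (k : ℕ) l with hi | hi | hi
  · rw [cnsT_lt _ hi, cnsT_lt _ hi, extT_lt _ (by omega : (k:ℕ) < N + 1),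
      extT_lt _ (by omega : (k:ℕ) < N + 1)]
  · rw [cnsT_eq _ hi, cnsT_eq _ hi, extT_lt _ (by omega : (k:ℕ) < N + 1),
      extT_lt _ (by omega : (k:ℕ) < N + 1), extT_lt _ (by omega : (k:ℕ) + 1 < N + 1),
      extT_lt _ (by omega : (k:ℕ) + 1 < N + 1)]
    group
  · rw [cnsT_gt _ hi, cnsT_gt _ hi, extT_lt _ (by omega : (k:ℕ) + 1 < N + 1),
      extT_lt _ (by omega : (k:ℕ) + 1 < N + 1)]

end Tuples

section Cochain
variable {R : Type} [CommRing R] {K : Type} [Group K]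
  {M : Type} [AddCommGroup M] [Module R M]

lemma negpow (R : Type) [CommRing R] (a b : ℕ) (hab : a % 2 = b % 2) :
    (-1 : R) ^ a = (-1 : R) ^ b := by
  conv_lhs => rw [← Nat.div_add_mod a 2]
  conv_rhs => rw [← Nat.div_add_mod b 2]
  rw [hab, pow_add, pow_add, pow_mul, pow_mul]
  norm_num

variable (σ : Representation R K M) (h : K)

def dF (n : ℕ) (c : (Fin n → K) → M) : (Fin (n + 1) → K) → M := fun x =>
  σ (x 0) (c fun i => x i.succ) +
    ∑ j ∈ Finset.range (n + 1), (-1 : R) ^ (j + 1) • c (resT n (cnsT j (extT x)))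

def sF (n : ℕ) (c : (Fin (n + 1) → K) → M) : (Fin n → K) → M := fun x =>
  ∑ j ∈ Finset.range (n + 1), (-1 : R) ^ j • c (resT (n + 1) (inzT h j (extT x)))

def cF (n : ℕ) (c : (Fin n → K) → M) : (Fin n → K) → M := fun x =>
  σ h (c fun k => h⁻¹ * x k * h)

/-- The main homotopy identity in positive degrees. -/
lemma key_identity (n : ℕ) (c : (Fin (n + 1) → K) → M) (x : Fin (n + 1) → K) :
    cF σ h (n + 1) c x
      = sF (R := R) h (n + 1) (dF σ (n + 1) c) x + dF σ n (sF (R := R) h n c) x + c x := by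
  -- Step 1 : expansion of sF (dF c)
  have hexp : sF (R := R) h (n + 1) (dF σ (n + 1) c) x
      = (∑ j ∈ Finset.range (n + 2), (-1 : R) ^ j •
          σ ((resT (n + 2) (inzT h j (extT x))) 0)
            (c fun i => (resT (n + 2) (inzT h j (extT x))) i.succ))
        + ∑ j ∈ Finset.range (n + 2), ∑ l ∈ Finset.range (n + 2),
            (-1 : R) ^ (j + l + 1) • c (resT (n + 1) (cnsT l (inzT h j (extT x)))) := by
    show (∑ j ∈ Finset.range (n + 2), (-1 : R) ^ j •
        dF σ (n + 1) c (resT (n + 2) (inzT h j (extT x)))) = _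
    rw [← Finset.sum_add_distrib]
    refine Finset.sum_congr rfl fun j _ => ?_
    show (-1 : R) ^ j • (_ + _) = _
    rw [smul_add]
    congr 1
    rw [Finset.smul_sum]
    refine Finset.sum_congr rfl fun l _ => ?_
    rw [resT_cnsT_extT, smul_smul, ← pow_add, ← add_assoc]
  -- Step 2 : the A-part
  have hA : (∑ j ∈ Finset.range (n + 2), (-1 : R) ^ j •
          σ ((resT (n + 2) (inzT h j (extT x))) 0)
            (c fun i => (resT (n + 2) (inzT h j (extT x))) i.succ))
      = -(σ (x 0) (sF (R := R) h n c fun k => x k.succ)) + cF σ h (n + 1) c x := by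
    rw [Finset.sum_range_succ']
    congr 1
    · -- terms j+1
      rw [show σ (x 0) (sF (R := R) h n c fun k => x k.succ)
          = ∑ j ∈ Finset.range (n + 1), (-1 : R) ^ j •
              σ (x 0) (c (resT (n + 1) (inzT h j (extT fun k : Fin n => x k.succ)))) by
        show σ (x 0) (∑ j ∈ Finset.range (n + 1), _) = _
        rw [map_sum]
        exact Finset.sum_congr rfl fun j _ => (map_smul _ _ _)]
      rw [← Finset.sum_neg_distrib]
      refine Finset.sum_congr rfl fun j _ => ?_
      have h0 : (resT (n + 2) (inzT h (j + 1) (extT x))) 0 = x 0 := by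
        show inzT h (j + 1) (extT x) 0 = x 0
        rw [inzT_succ_zero]
        exact extT_lt x (by omega)
      have harg : (fun i : Fin (n + 1) => (resT (n + 2) (inzT h (j + 1) (extT x))) i.succ)
          = resT (n + 1) (inzT h j (extT fun k : Fin n => x k.succ)) := by
        funext i
        show inzT h (j + 1) (extT x) ((i : ℕ) + 1) = inzT h j (extT fun k : Fin n => x k.succ) i
        rw [inzT_succ_succ, ← extT_succ]
      rw [h0, harg, pow_succ, mul_smul, neg_one_smul, smul_neg]
    · -- term j = 0
      have h0 : (resT (n + 2) (inzT h 0 (extT x))) 0 = h := inzT_zero_zero h (extT x)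
      have harg : (fun i : Fin (n + 1) => (resT (n + 2) (inzT h 0 (extT x))) i.succ)
          = fun k : Fin (n + 1) => h⁻¹ * x k * h := by
        funext i
        show inzT h 0 (extT x) ((i : ℕ) + 1) = _
        rw [inzT_zero_succ, extT_lt x i.isLt]
      rw [h0, harg, pow_zero, one_smul]
      rfl
  -- Step 3 : the B-part
  have hB : (∑ j ∈ Finset.range (n + 2), ∑ l ∈ Finset.range (n + 2),
          (-1 : R) ^ (j + l + 1) • c (resT (n + 1) (cnsT l (inzT h j (extT x)))))
      = -(c x) + ∑ u ∈ Finset.range (n + 1), ∑ t ∈ Finset.range (n + 1),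
          (-1 : R) ^ (u + t) • c (resT (n + 1) (inzT h u (cnsT t (extT x)))) := by
    have hsplit : ∀ j ∈ Finset.range (n + 2),
        (∑ l ∈ Finset.range (n + 2),
            (-1 : R) ^ (j + l + 1) • c (resT (n + 1) (cnsT l (inzT h j (extT x)))))
          = (∑ l ∈ Finset.range j,
              (-1 : R) ^ (j + l + 1) • c (resT (n + 1) (cnsT l (inzT h j (extT x)))))
            + ((-1 : R) ^ (j + j + 1) • c (resT (n + 1) (cnsT j (inzT h j (extT x))))
              + ∑ l ∈ Finset.Ico (j + 1) (n + 2),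
                  (-1 : R) ^ (j + l + 1) • c (resT (n + 1) (cnsT l (inzT h j (extT x))))) := by
      intro j hj
      rw [Finset.mem_range] at hj
      rw [Finset.range_eq_Ico, ← Finset.sum_Ico_consecutive _ (Nat.zero_le j) (le_of_lt hj),
        Finset.sum_eq_sum_Ico_succ_bot hj, ← Finset.range_eq_Ico]
    rw [Finset.sum_congr rfl hsplit, Finset.sum_add_distrib, Finset.sum_add_distrib]
    have hP1 : (∑ j ∈ Finset.range (n + 2), ∑ l ∈ Finset.range j,
          (-1 : R) ^ (j + l + 1) • c (resT (n + 1) (cnsT l (inzT h j (extT x)))))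
        = (∑ j ∈ Finset.range (n + 1), ∑ l ∈ Finset.range j,
            (-1 : R) ^ (j + l) • c (resT (n + 1) (inzT h j (cnsT l (extT x)))))
          + ∑ j ∈ Finset.range (n + 1),
              (-1 : R) ^ (j + 1 + j + 1) • c (resT (n + 1) (cnsT j (inzT h (j + 1) (extT x)))) := by
      rw [Finset.sum_range_succ']
      simp only [Finset.range_zero, Finset.sum_empty, add_zero]
      rw [← Finset.sum_add_distrib]
      refine Finset.sum_congr rfl fun j _ => ?_
      rw [Finset.sum_range_succ]
      congr 1
      refine Finset.sum_congr rfl fun l hl => ?_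
      rw [Finset.mem_range] at hl
      rw [cnsT_inzT_of_lt h hl, negpow R (j + 1 + l + 1) (j + l) (by omega)]
    have hP2 : (∑ j ∈ Finset.range (n + 2),
          (-1 : R) ^ (j + j + 1) • c (resT (n + 1) (cnsT j (inzT h j (extT x)))))
        = -(c x) + ∑ j ∈ Finset.range (n + 1),
            (-1 : R) ^ (j + j + 1) • c (resT (n + 1) (cnsT j (inzT h j (extT x)))) := by
      rw [Finset.sum_range_succ, add_comm]
      congr 1
      rw [negpow R (n + 1 + (n + 1) + 1) 1 (by omega), pow_one, cnsT_inzT_top, neg_one_smul]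
    have hcancel : (∑ j ∈ Finset.range (n + 1),
          (-1 : R) ^ (j + 1 + j + 1) • c (resT (n + 1) (cnsT j (inzT h (j + 1) (extT x)))))
        + ∑ j ∈ Finset.range (n + 1),
            (-1 : R) ^ (j + j + 1) • c (resT (n + 1) (cnsT j (inzT h j (extT x)))) = 0 := by
      rw [← Finset.sum_add_distrib]
      refine Finset.sum_eq_zero fun j _ => ?_
      rw [← cnsT_inzT_diag, negpow R (j + 1 + j + 1) 0 (by omega),
        negpow R (j + j + 1) 1 (by omega), pow_zero, pow_one, one_smul, neg_one_smul,
        add_neg_cancel]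
    have hP3 : (∑ j ∈ Finset.range (n + 2), ∑ l ∈ Finset.Ico (j + 1) (n + 2),
          (-1 : R) ^ (j + l + 1) • c (resT (n + 1) (cnsT l (inzT h j (extT x)))))
        = ∑ j ∈ Finset.range (n + 1), ∑ t ∈ Finset.Ico j (n + 1),
            (-1 : R) ^ (j + t) • c (resT (n + 1) (inzT h j (cnsT t (extT x)))) := by
      rw [Finset.sum_range_succ]
      simp only [Finset.Ico_self, Finset.sum_empty, add_zero]
      refine Finset.sum_congr rfl fun j hj => ?_
      rw [Finset.mem_range] at hj
      rw [Finset.sum_Ico_eq_sum_range, Finset.sum_Ico_eq_sum_range]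
      have hlen : n + 2 - (j + 1) = n + 1 - j := by omega
      rw [hlen]
      refine Finset.sum_congr rfl fun i _ => ?_
      show (-1 : R) ^ (j + (j + 1 + i) + 1) • c (resT (n + 1) (cnsT (j + 1 + i) (inzT h j (extT x))))
          = (-1 : R) ^ (j + (j + i)) • c (resT (n + 1) (inzT h j (cnsT (j + i) (extT x))))
      rw [show j + 1 + i = (j + i) + 1 by omega, cnsT_inzT_of_ge h (by omega),
        negpow R (j + ((j + i) + 1) + 1) (j + (j + i)) (by omega)]
    rw [hP1, hP2, hP3]
    rw [show ((∑ j ∈ Finset.range (n + 1), ∑ l ∈ Finset.range j,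
            (-1 : R) ^ (j + l) • c (resT (n + 1) (inzT h j (cnsT l (extT x)))))
          + ∑ j ∈ Finset.range (n + 1),
              (-1 : R) ^ (j + 1 + j + 1) • c (resT (n + 1) (cnsT j (inzT h (j + 1) (extT x)))))
          + ((-(c x) + ∑ j ∈ Finset.range (n + 1),
              (-1 : R) ^ (j + j + 1) • c (resT (n + 1) (cnsT j (inzT h j (extT x)))))
            + ∑ j ∈ Finset.range (n + 1), ∑ t ∈ Finset.Ico j (n + 1),
                (-1 : R) ^ (j + t) • c (resT (n + 1) (inzT h j (cnsT t (extT x)))))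
        = -(c x) + (((∑ j ∈ Finset.range (n + 1),
              (-1 : R) ^ (j + 1 + j + 1) • c (resT (n + 1) (cnsT j (inzT h (j + 1) (extT x)))))
            + ∑ j ∈ Finset.range (n + 1),
                (-1 : R) ^ (j + j + 1) • c (resT (n + 1) (cnsT j (inzT h j (extT x)))))
          + ((∑ j ∈ Finset.range (n + 1), ∑ l ∈ Finset.range j,
              (-1 : R) ^ (j + l) • c (resT (n + 1) (inzT h j (cnsT l (extT x)))))
            + ∑ j ∈ Finset.range (n + 1), ∑ t ∈ Finset.Ico j (n + 1),
                (-1 : R) ^ (j + t) • c (resT (n + 1) (inzT h j (cnsT t (extT x)))))) by abel]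
    rw [hcancel, zero_add, ← Finset.sum_add_distrib]
    congr 1
    refine Finset.sum_congr rfl fun j hj => ?_
    rw [Finset.mem_range] at hj
    rw [Finset.range_eq_Ico, Finset.sum_Ico_consecutive _ (Nat.zero_le j) (by omega),
      ← Finset.range_eq_Ico]
  -- Step 4 : expansion of dF (sF c)
  have hP : dF σ n (sF (R := R) h n c) x
      = σ (x 0) (sF (R := R) h n c fun k => x k.succ)
        + -(∑ u ∈ Finset.range (n + 1), ∑ t ∈ Finset.range (n + 1),
            (-1 : R) ^ (u + t) • c (resT (n + 1) (inzT h u (cnsT t (extT x))))) := by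
    show σ (x 0) (sF (R := R) h n c fun i => x i.succ)
        + (∑ l ∈ Finset.range (n + 1), (-1 : R) ^ (l + 1) •
            sF (R := R) h n c (resT n (cnsT l (extT x)))) = _
    congr 1
    rw [Finset.sum_comm]
    rw [← Finset.sum_neg_distrib]
    refine Finset.sum_congr rfl fun l hl => ?_
    rw [Finset.mem_range] at hl
    show (-1 : R) ^ (l + 1) •
        (∑ u ∈ Finset.range (n + 1), (-1 : R) ^ u •
          c (resT (n + 1) (inzT h u (extT (resT n (cnsT l (extT x))))))) = _
    rw [Finset.smul_sum, ← Finset.sum_neg_distrib]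
    refine Finset.sum_congr rfl fun u hu => ?_
    rw [Finset.mem_range] at hu
    rw [resT_inzT_extT h (by omega : u ≤ n), smul_smul, ← pow_add,
      negpow R (l + 1 + u) (u + l + 1) (by omega), pow_succ, mul_comm, ← smul_smul,
      neg_one_smul]
  rw [hexp, hA, hB, hP]
  abel

lemma key_identity_zero (c : (Fin 0 → K) → M) (x : Fin 0 → K) :
    cF σ h 0 c x = sF (R := R) h 0 (dF σ 0 c) x + c x := by
  have e1 : sF (R := R) h 0 (dF σ 0 c) x
      = dF σ 0 c (resT 1 (inzT h 0 (extT x))) := by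
    show (∑ j ∈ Finset.range 1,
        (-1 : R) ^ j • dF σ 0 c (resT 1 (inzT h j (extT x)))) = _
    rw [Finset.sum_range_one, pow_zero, one_smul]
  have e2 : dF σ 0 c (resT 1 (inzT h 0 (extT x)))
      = σ h (c fun k : Fin 0 => h⁻¹ * x k * h) + (-1 : R) • c x := by
    show σ ((resT 1 (inzT h 0 (extT x))) 0)
        (c fun i : Fin 0 => (resT 1 (inzT h 0 (extT x))) i.succ)
      + (∑ j ∈ Finset.range 1, (-1 : R) ^ (j + 1) •
          c (resT 0 (cnsT j (extT (resT 1 (inzT h 0 (extT x))))))) = _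
    rw [Finset.sum_range_one, pow_one,
      show (resT 1 (inzT h 0 (extT x))) 0 = h from inzT_zero_zero h (extT x),
      show (fun i : Fin 0 => (resT 1 (inzT h 0 (extT x))) i.succ)
        = fun k : Fin 0 => h⁻¹ * x k * h from Subsingleton.elim _ _]
    congr 1
    exact congrArg (fun z => (-1 : R) • c z) (Subsingleton.elim _ _)
  rw [e1, e2, neg_one_smul, neg_add_cancel_right]
  rfl

/-- chain-map property of the conjugation operator. -/
lemma dF_cF (n : ℕ) (c : (Fin n → K) → M) :
    dF σ n (cF σ h n c) = cF σ h (n + 1) (dF σ n c) := by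
  funext x
  show σ (x 0) (σ h (c fun k => h⁻¹ * x k.succ * h))
      + (∑ l ∈ Finset.range (n + 1), (-1 : R) ^ (l + 1) •
          σ h (c fun k => h⁻¹ * (resT n (cnsT l (extT x))) k * h))
    = σ h (σ (h⁻¹ * x 0 * h) (c fun i => h⁻¹ * x i.succ * h)
        + ∑ l ∈ Finset.range (n + 1), (-1 : R) ^ (l + 1) •
            c (resT n (cnsT l (extT fun k => h⁻¹ * x k * h))))
  rw [map_add]
  congr 1
  · show (σ (x 0) * σ h) (c fun k => h⁻¹ * x k.succ * h)
        = (σ h * σ (h⁻¹ * x 0 * h)) (c fun i => h⁻¹ * x i.succ * h)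
    rw [← map_mul, ← map_mul, show h * (h⁻¹ * x 0 * h) = x 0 * h by group]
  · rw [map_sum]
    refine Finset.sum_congr rfl fun l hl => ?_
    rw [Finset.mem_range] at hl
    rw [map_smul, cnsT_conj h hl x]

/-- chain-map property of postcomposition with an intertwining operator. -/
lemma dF_post (B : M →ₗ[R] M) (hB : ∀ (k : K) (m : M), B (σ k m) = σ k (B m))
    (n : ℕ) (c : (Fin n → K) → M) :
    dF σ n (fun y => B (c y)) = fun x => B (dF σ n c x) := by
  funext x
  show σ (x 0) (B (c fun i => x i.succ)) + (∑ l ∈ Finset.range (n + 1),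
      (-1 : R) ^ (l + 1) • B (c (resT n (cnsT l (extT x)))))
    = B (σ (x 0) (c fun i => x i.succ) + ∑ l ∈ Finset.range (n + 1),
        (-1 : R) ^ (l + 1) • c (resT n (cnsT l (extT x))))
  rw [map_add, ← hB, map_sum]
  congr 1
  exact Finset.sum_congr rfl fun l _ => (map_smul B _ _).symm

/-- mathlib's inhomogeneous differential agrees with `dF`. -/
lemma d_eq_dF (n : ℕ) (c : (Fin n → K) → M) (x : Fin (n + 1) → K) :
    inhomogeneousCochains.d (Rep.of σ) n c x = dF σ n c x := by
  rw [inhomogeneousCochains.d_hom_apply]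
  show σ (x 0) (c fun i => x i.succ) + _ = σ (x 0) (c fun i => x i.succ) + _
  congr 1
  rw [← Fin.sum_univ_eq_sum_range
    (fun j => (-1 : R) ^ (j + 1) • c (resT n (cnsT j (extT x)))) (n + 1)]
  exact Finset.sum_congr rfl fun j _ => by rw [contractNth_eq]

end Cochain

section Maps
variable {R : Type} [CommRing R] {K : Type} [Group K]
  {M : Type} [AddCommGroup M] [Module R M] (σ : Representation R K M) (h : K)

noncomputable def sLin (n : ℕ) :
    ((Fin (n + 1) → K) → M) →ₗ[R] ((Fin n → K) → M) where
  toFun := sF (R := R) h n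
  map_add' c₁ c₂ := by
    funext x
    show (∑ j ∈ Finset.range (n + 1),
        (-1 : R) ^ j • (c₁ + c₂) (resT (n + 1) (inzT h j (extT x)))) = _
    simp only [Pi.add_apply, smul_add, Finset.sum_add_distrib]
    rfl
  map_smul' r c := by
    funext x
    show (∑ j ∈ Finset.range (n + 1),
        (-1 : R) ^ j • (r • c) (resT (n + 1) (inzT h j (extT x))))
      = r • ∑ j ∈ Finset.range (n + 1),
          (-1 : R) ^ j • c (resT (n + 1) (inzT h j (extT x)))
    rw [Finset.smul_sum]
    exact Finset.sum_congr rfl fun j _ => smul_comm _ _ _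

noncomputable def cLin (n : ℕ) :
    ((Fin n → K) → M) →ₗ[R] ((Fin n → K) → M) where
  toFun := cF σ h n
  map_add' c₁ c₂ := by
    funext x
    show σ h ((c₁ + c₂) _) = _
    simp only [Pi.add_apply, map_add]
    rfl
  map_smul' r c := by
    funext x
    show σ h ((r • c) _) = _
    simp only [Pi.smul_apply, RingHom.id_apply, map_smul]
    rfl

noncomputable def postLin (B : M →ₗ[R] M) (n : ℕ) :
    ((Fin n → K) → M) →ₗ[R] ((Fin n → K) → M) :=
  B.compLeft (Fin n → K)

/-- The conjugation chain endomorphism. -/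
noncomputable def conjHom :
    inhomogeneousCochains (Rep.of σ) ⟶ inhomogeneousCochains (Rep.of σ) where
  f n := ModuleCat.ofHom (cLin σ h n)
  comm' i j hij := by
    simp only [ComplexShape.up_Rel] at hij
    subst hij
    rw [inhomogeneousCochains.d_def]
    refine ModuleCat.hom_ext (LinearMap.ext fun c => funext fun x => ?_)
    show inhomogeneousCochains.d (Rep.of σ) i (cF σ h i c) x
        = σ h ((inhomogeneousCochains.d (Rep.of σ) i c) fun k => h⁻¹ * x k * h)
    rw [d_eq_dF, d_eq_dF]
    exact congrFun (dF_cF σ h i c) x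

/-- The postcomposition chain endomorphism. -/
noncomputable def psiHom (B : M →ₗ[R] M)
    (hB : ∀ (k : K) (m : M), B (σ k m) = σ k (B m)) :
    inhomogeneousCochains (Rep.of σ) ⟶ inhomogeneousCochains (Rep.of σ) where
  f n := ModuleCat.ofHom (postLin (R := R) (K := K) B n)
  comm' i j hij := by
    simp only [ComplexShape.up_Rel] at hij
    subst hij
    rw [inhomogeneousCochains.d_def]
    refine ModuleCat.hom_ext (LinearMap.ext fun c => funext fun x => ?_)
    show inhomogeneousCochains.d (Rep.of σ) i (fun y => B (c y)) x
        = B ((inhomogeneousCochains.d (Rep.of σ) i c) x)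
    rw [d_eq_dF, d_eq_dF]
    exact congrFun (dF_post σ B hB i c) x

noncomputable def htyHom (i j : ℕ) :
    (inhomogeneousCochains (Rep.of σ)).X i ⟶ (inhomogeneousCochains (Rep.of σ)).X j :=
  if hij : j + 1 = i then
    (CategoryTheory.eqToHom (congrArg (inhomogeneousCochains (Rep.of σ)).X hij.symm))
      ≫ ModuleCat.ofHom (sLin (R := R) h j : ((Fin (j + 1) → K) → M) →ₗ[R] ((Fin j → K) → M))
  else 0

lemma htyHom_succ (j : ℕ) :
    htyHom σ h (j + 1) j
      = ModuleCat.ofHom (sLin (R := R) h j : ((Fin (j + 1) → K) → M) →ₗ[R] ((Fin j → K) → M)) := by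
  simp [htyHom]

/-- The homotopy from conjugation to the identity. -/
noncomputable def conjHomotopy : Homotopy (conjHom σ h) (𝟙 _) where
  hom i j := htyHom σ h i j
  zero i j hij := by
    simp only [ComplexShape.up_Rel] at hij
    exact dif_neg hij
  comm i := by
    rcases i with _ | n
    · have h1 : prevD 0 (htyHom σ h) = 0 := by
        rw [prevD_nat]
        have : htyHom σ h 0 (0 - 1) = 0 := dif_neg (by omega)
        rw [this, Limits.zero_comp]
      have h2 : dNext 0 (htyHom σ h) =
          (inhomogeneousCochains (Rep.of σ)).d 0 1 ≫ htyHom σ h 1 0 :=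
        dNext_eq _ (by simp)
      rw [h1, h2, htyHom_succ, add_zero, inhomogeneousCochains.d_def]
      refine ModuleCat.hom_ext (LinearMap.ext fun c => funext fun x => ?_)
      show cF σ h 0 c x
          = sF (R := R) h 0 (inhomogeneousCochains.d (Rep.of σ) 0 c) x + c x
      have : sF (R := R) h 0 (inhomogeneousCochains.d (Rep.of σ) 0 c) x
          = sF (R := R) h 0 (dF σ 0 c) x := by
        show (∑ j ∈ Finset.range 1, (-1 : R) ^ j •
            (inhomogeneousCochains.d (Rep.of σ) 0 c) (resT 1 (inzT h j (extT x)))) = _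
        exact Finset.sum_congr rfl fun j _ => by rw [d_eq_dF]
      rw [this]
      exact key_identity_zero σ h c x
    · have h1 : prevD (n + 1) (htyHom σ h) =
          htyHom σ h (n + 1) n ≫ (inhomogeneousCochains (Rep.of σ)).d n (n + 1) := by
        rw [prevD_nat]
        have hnn : n + 1 - 1 = n := rfl
        rw [hnn]
      have h2 : dNext (n + 1) (htyHom σ h) =
          (inhomogeneousCochains (Rep.of σ)).d (n + 1) (n + 2) ≫ htyHom σ h (n + 2) (n + 1) :=
        dNext_eq _ (by simp)
      rw [h1, h2, htyHom_succ, htyHom_succ, inhomogeneousCochains.d_def,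
        inhomogeneousCochains.d_def]
      refine ModuleCat.hom_ext (LinearMap.ext fun c => funext fun x => ?_)
      show cF σ h (n + 1) c x
          = sF (R := R) h (n + 1) (inhomogeneousCochains.d (Rep.of σ) (n + 1) c) x
            + inhomogeneousCochains.d (Rep.of σ) n (sF (R := R) h n c) x + c x
      have e1 : sF (R := R) h (n + 1) (inhomogeneousCochains.d (Rep.of σ) (n + 1) c) x
          = sF (R := R) h (n + 1) (dF σ (n + 1) c) x := by
        show (∑ j ∈ Finset.range (n + 2), (-1 : R) ^ j •
            (inhomogeneousCochains.d (Rep.of σ) (n + 1) c) (resT (n + 2) (inzT h j (extT x)))) = _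
        exact Finset.sum_congr rfl fun j _ => by rw [d_eq_dF]
      rw [e1, d_eq_dF]
      exact key_identity σ h n c x

end Maps

section PsiAlgebra
variable {R : Type} [CommRing R] {K : Type} [Group K]
  {M : Type} [AddCommGroup M] [Module R M] (σ : Representation R K M)

lemma psiHom_congr {B B' : M →ₗ[R] M}
    {hB : ∀ (k : K) (m : M), B (σ k m) = σ k (B m)}
    {hB' : ∀ (k : K) (m : M), B' (σ k m) = σ k (B' m)} (e : B = B') :
    psiHom σ B hB = psiHom σ B' hB' := by subst e; rfl

lemma psiHom_id :
    psiHom σ LinearMap.id (fun k m => rfl) = 𝟙 _ :=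
  HomologicalComplex.hom_f_injective (funext fun n => ModuleCat.hom_ext (LinearMap.ext fun c => rfl))

lemma psiHom_comp (B₁ B₂ : M →ₗ[R] M)
    (hB₁ : ∀ (k : K) (m : M), B₁ (σ k m) = σ k (B₁ m))
    (hB₂ : ∀ (k : K) (m : M), B₂ (σ k m) = σ k (B₂ m))
    (hB₃ : ∀ (k : K) (m : M), (B₂ ∘ₗ B₁) (σ k m) = σ k ((B₂ ∘ₗ B₁) m)) :
    psiHom σ B₁ hB₁ ≫ psiHom σ B₂ hB₂ = psiHom σ (B₂ ∘ₗ B₁) hB₃ :=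
  HomologicalComplex.hom_f_injective (funext fun n => ModuleCat.hom_ext (LinearMap.ext fun c => rfl))

lemma psiHom_add (B₁ B₂ : M →ₗ[R] M)
    (hB₁ : ∀ (k : K) (m : M), B₁ (σ k m) = σ k (B₁ m))
    (hB₂ : ∀ (k : K) (m : M), B₂ (σ k m) = σ k (B₂ m))
    (hB₃ : ∀ (k : K) (m : M), (B₁ + B₂) (σ k m) = σ k ((B₁ + B₂) m)) :
    psiHom σ (B₁ + B₂) hB₃ = psiHom σ B₁ hB₁ + psiHom σ B₂ hB₂ :=
  HomologicalComplex.hom_f_injective (funext fun n => ModuleCat.hom_ext (LinearMap.ext fun c => rfl))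

lemma psiHom_smul (a : R) (B : M →ₗ[R] M)
    (hB : ∀ (k : K) (m : M), B (σ k m) = σ k (B m))
    (hB' : ∀ (k : K) (m : M), (a • B) (σ k m) = σ k ((a • B) m)) :
    psiHom σ (a • B) hB' = a • psiHom σ B hB :=
  HomologicalComplex.hom_f_injective (funext fun n => ModuleCat.hom_ext (LinearMap.ext fun c => rfl))

lemma psiHom_zero (h0 : ∀ (k : K) (m : M), (0 : M →ₗ[R] M) (σ k m) = σ k ((0 : M →ₗ[R] M) m)) :
    psiHom σ 0 h0 = 0 :=
  HomologicalComplex.hom_f_injective (funext fun n => ModuleCat.hom_ext (LinearMap.ext fun c => rfl))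

end PsiAlgebra

lemma homologyMap_smul'' {R ι : Type} [CommRing R] {c : ComplexShape ι}
    {K L : HomologicalComplex (ModuleCat R) c} (φ : K ⟶ L) (i : ι) (a : R) :
    HomologicalComplex.homologyMap (a • φ) i = a • HomologicalComplex.homologyMap φ i := by
  dsimp only [HomologicalComplex.homologyMap]
  rw [show (HomologicalComplex.shortComplexFunctor (ModuleCat R) c i).map (a • φ)
      = a • (HomologicalComplex.shortComplexFunctor (ModuleCat R) c i).map φ from by ext <;> rfl]
  exact ShortComplex.homologyMap_smul ..

/-- Let `G` be a group, `H` a normal subgroup, `M` an `R[G]`-module (given by a representation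
`ρ : G →* End_R(M)`), and `g` a central element of `G`.  Let `g₁ = g·h` be any element of the
coset `gH`, and let `Φ` be the endomorphism of the complex of inhomogeneous cochains of the
`H`-representation `M` induced by the compatible pair `(c_{g₁}, ρ(g₁))`, i.e.
`(Φ c)(x) = ρ(g₁) (c (g₁⁻¹ · x · g₁))`.  If `p(ρ(g)) = 0` for a polynomial `p ∈ R[X]`, then the
endomorphism `T` of `Hⁱ(H, M)` induced by `Φ` satisfies `p(T) = 0`, for every `i ≥ 0`. -/
theorem aeval_induced_map_groupCohomology_eq_zero
    (R : Type) [CommRing R] (G : Type) [Group G] (H : Subgroup G) (hH : H.Normal)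
    (M : Type) [AddCommGroup M] [Module R M]
    (ρ : Representation R G M)
    (g : G) (hg : g ∈ Subgroup.center G)
    (g₁ : G) (hg₁ : ∃ h ∈ H, g₁ = g * h)
    (Φ : inhomogeneousCochains (Rep.of (ρ.comp H.subtype)) ⟶
         inhomogeneousCochains (Rep.of (ρ.comp H.subtype)))
    (hΦ : ∀ (n : ℕ) (c : (Fin n → H) → M) (x : Fin n → H),
      (Φ.f n) c x = ρ g₁ (c fun j =>
        (⟨g₁⁻¹ * (x j : G) * g₁, by simpa using hH.conj_mem _ (x j).2 g₁⁻¹⟩ : H)))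
    (i : ℕ) (p : Polynomial R)
    (hp : Polynomial.aeval (ρ g) p = 0) :
    Polynomial.aeval
      (A := Module.End R (groupCohomology (Rep.of (ρ.comp H.subtype)) i))
      (HomologicalComplex.homologyMap Φ i).hom p = 0 := by
  obtain ⟨hh, hhH, hgh⟩ := hg₁
  have hgc : ∀ y : G, y * g = g * y := fun y => (Subgroup.mem_center_iff.mp hg y)
  -- commutation of ρ g with the H-action
  have hcomm : ∀ (k : ↥H) (m : M), (ρ g) ((ρ.comp H.subtype) k m) = (ρ.comp H.subtype) k ((ρ g) m) := by
    intro k m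
    show (ρ g * ρ (k : G)) m = (ρ (k : G) * ρ g) m
    rw [← map_mul, ← map_mul, hgc (k : G)]
  -- commutation of polynomials in ρ g with the H-action
  have hpow : ∀ (n : ℕ) (k : ↥H) (m : M),
      ((ρ g) ^ n) ((ρ.comp H.subtype) k m) = (ρ.comp H.subtype) k (((ρ g) ^ n) m) := by
    intro n
    induction n with
    | zero => intro k m; rfl
    | succ n ih =>
      intro k m
      rw [pow_succ, Module.End.mul_apply, Module.End.mul_apply, hcomm, ih]
  have hcommP : ∀ (q : Polynomial R) (k : ↥H) (m : M),
      (Polynomial.aeval (ρ g) q) ((ρ.comp H.subtype) k m)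
        = (ρ.comp H.subtype) k ((Polynomial.aeval (ρ g) q) m) := by
    intro q
    induction q using Polynomial.induction_on' with
    | add p q hp' hq' =>
      intro k m
      rw [map_add, LinearMap.add_apply, LinearMap.add_apply, hp' k m, hq' k m, map_add]
    | monomial n a =>
      intro k m
      rw [Polynomial.aeval_monomial, Module.End.mul_apply, Module.End.mul_apply,
        hpow n k m, Module.algebraMap_end_apply, Module.algebraMap_end_apply,
        map_smul]
  have hhom_eq : ∀ (B B' : M →ₗ[R] M)
      (hB : ∀ (k : ↥H) (m : M), B ((ρ.comp H.subtype) k m) = (ρ.comp H.subtype) k (B m))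
      (hB' : ∀ (k : ↥H) (m : M), B' ((ρ.comp H.subtype) k m) = (ρ.comp H.subtype) k (B' m)),
      B = B' →
      HomologicalComplex.homologyMap (psiHom (ρ.comp H.subtype) B hB) i
        = HomologicalComplex.homologyMap (psiHom (ρ.comp H.subtype) B' hB') i := by
    intro B B' hB hB' e
    subst e
    rfl
  set η : ↥H := ⟨hh, hhH⟩ with hη
  -- decomposition of Φ
  have hΦeq : Φ = psiHom (ρ.comp H.subtype) (ρ g) hcomm ≫ conjHom (ρ.comp H.subtype) η := by
    refine HomologicalComplex.hom_f_injective
      (funext fun n => ModuleCat.hom_ext (LinearMap.ext fun c => funext fun x => ?_))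
    show (Φ.f n) c x
      = ((psiHom (ρ.comp H.subtype) (ρ g) hcomm ≫ conjHom (ρ.comp H.subtype) η).f n) c x
    rw [hΦ n c x]
    show ρ g₁ (c fun j => (⟨g₁⁻¹ * ((x j : G)) * g₁, by
          simpa using hH.conj_mem _ (x j).2 g₁⁻¹⟩ : ↥H))
      = (ρ.comp H.subtype) η ((ρ g) (c fun k => η⁻¹ * x k * η))
    have harg : (fun j => (⟨g₁⁻¹ * ((x j : G)) * g₁, by
          simpa using hH.conj_mem _ (x j).2 g₁⁻¹⟩ : ↥H))
        = fun k => η⁻¹ * x k * η := by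
      funext j
      apply Subtype.ext
      show g₁⁻¹ * ((x j : G)) * g₁ = (hh : G)⁻¹ * (x j : G) * hh
      rw [hgh, mul_inv_rev]
      have hcent : g⁻¹ * (x j : G) * g = (x j : G) := by
        rw [mul_assoc, hgc (x j : G), inv_mul_cancel_left]
      calc hh⁻¹ * g⁻¹ * (x j : G) * (g * hh)
          = hh⁻¹ * (g⁻¹ * (x j : G) * g) * hh := by group
        _ = hh⁻¹ * (x j : G) * hh := by rw [hcent]
    rw [harg]
    show ρ g₁ (c fun k => η⁻¹ * x k * η) = (ρ hh * ρ g) (c fun k => η⁻¹ * x k * η)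
    rw [← map_mul, hgh, hgc hh]
  -- pass to homology
  have hT : HomologicalComplex.homologyMap Φ i
      = HomologicalComplex.homologyMap (psiHom (ρ.comp H.subtype) (ρ g) hcomm) i := by
    rw [hΦeq, HomologicalComplex.homologyMap_comp,
      (conjHomotopy (ρ.comp H.subtype) η).homologyMap_eq i,
      HomologicalComplex.homologyMap_id, CategoryTheory.Category.comp_id]
  -- the aeval computation
  have key : ∀ q : Polynomial R,
      Polynomial.aeval
        (A := Module.End R (groupCohomology (Rep.of (ρ.comp H.subtype)) i))
        (HomologicalComplex.homologyMap (psiHom (ρ.comp H.subtype) (ρ g) hcomm) i).hom q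
      = (HomologicalComplex.homologyMap
          (psiHom (ρ.comp H.subtype) (Polynomial.aeval (ρ g) q) (hcommP q)) i).hom := by
    intro q
    induction q using Polynomial.induction_on with
    | C a =>
      refine (Polynomial.aeval_C (A := Module.End R (groupCohomology (Rep.of (ρ.comp H.subtype)) i)) (x := _) a).trans ?_
      rw [hhom_eq _ (a • LinearMap.id) (hcommP _)
          (fun k m => by
            rw [LinearMap.smul_apply, LinearMap.smul_apply, LinearMap.id_apply,
              LinearMap.id_apply, map_smul])
          (by rw [Polynomial.aeval_C]; rfl),
        psiHom_smul _ a LinearMap.id (fun k m => rfl), homologyMap_smul'', psiHom_id,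
        HomologicalComplex.homologyMap_id]
      rfl
    | add p' q' hp' hq' =>
      rw [map_add, hp', hq']
      refine (ModuleCat.hom_add _ _).symm.trans ?_
      rw [← HomologicalComplex.homologyMap_add,
        ← psiHom_add _ _ _ (hcommP p') (hcommP q')
          (fun k m => by
            rw [LinearMap.add_apply, LinearMap.add_apply, hcommP p' k m, hcommP q' k m,
              map_add])]
      exact congrArg _ <| hhom_eq _ _ _ _ (map_add (Polynomial.aeval (ρ g)) p' q').symm
    | monomial n a ih =>
      have e1 : (Polynomial.C a * Polynomial.X ^ (n + 1) : Polynomial R)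
          = (Polynomial.C a * Polynomial.X ^ n) * Polynomial.X := by ring
      rw [e1, map_mul, ih]
      erw [Polynomial.aeval_X]
      show (HomologicalComplex.homologyMap (psiHom (ρ.comp H.subtype) (ρ g) hcomm) i ≫
          HomologicalComplex.homologyMap (psiHom (ρ.comp H.subtype) (Polynomial.aeval (ρ g)
            (Polynomial.C a * Polynomial.X ^ n)) (hcommP _)) i).hom = _
      rw [← HomologicalComplex.homologyMap_comp,
        psiHom_comp _ _ _ hcomm (hcommP _)
          (fun k m => by
            rw [LinearMap.comp_apply, LinearMap.comp_apply, hcomm k m,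
              hcommP (Polynomial.C a * Polynomial.X ^ n) k ((ρ g) m)])]
      exact congrArg _ <| hhom_eq _ _ _ _
        (by rw [map_mul (Polynomial.aeval (ρ g)) (Polynomial.C a * Polynomial.X ^ n)
              Polynomial.X, Polynomial.aeval_X]; rfl)
  rw [hT, key p,
    hhom_eq _ 0 (hcommP p) (fun k m => by simp) hp,
    psiHom_zero, HomologicalComplex.homologyMap_zero, ModuleCat.hom_zero]
  rfl
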